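/- Let A be a commutative ring and J a finitely generated ideal of A such that the J-adic completion Â of A is Noetherian. Let M be a finitely generated A-module and M' a submodule of M. Then the Ĵ-adic topology on the completion M̂' of M' coincides with the topology induced by the filtration by the completions of M' ∩ J^n M, i.e. the filtrations (Ĵ^n M̂') and ((M' ∩ J^n M)^) define the same topology on M̂'. -/

import Mathlib

/-!
STATEMENT 4: Let `A` be a commutative ring and `J` a finitely generated ideal of `A`
such that the `J`-adic completion `Â` of `A` is Noetherian.  Let `M` be a finitely
generated `A`-module and `M'` a submodule of `M`.  Then the `Ĵ`-adic topology on the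
completion `M̂'` of `M'` (taken with respect to the filtration `(M' ∩ J^n M)` induced
from the `J`-adic topology of `M`, and realized as the closure of the image of `M'`
in `M̂`) coincides with the topology induced by the filtration by the completions
(closures) of `M' ∩ J^n M`:  the filtrations `(Ĵ^n M̂')` and `((M' ∩ J^n M)^)` define
the same topology on `M̂'`.  (Generalized Artin–Rees.)
-/

open AdicCompletion

variable {A : Type*} [CommRing A] (J : Ideal A)
variable {M : Type*} [AddCommGroup M] [Module A M]

/-- The completion of a submodule `N ⊆ M` with respect to the filtration `(N ∩ J^n M)`
induced from the `J`-adic topology on `M`, realized as the closure of the image of `N`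
inside the `J`-adic completion `M̂ = lim M/J^n M`: it consists of those elements whose
`n`-th component lies in the image of `N` in `M/J^n M` for every `n`.  It is a module
over the completion `Â`. -/
def subCompletion (N : Submodule A M) :
    Submodule (AdicCompletion J A) (AdicCompletion J M) where
  carrier := {x | ∀ n : ℕ,
    x.val n ∈ Submodule.map (Submodule.mkQ (J ^ n • ⊤ : Submodule A M)) N}
  zero_mem' := fun n => by
    simp only [AdicCompletion.val_zero]
    exact Submodule.zero_mem _
  add_mem' := fun {x y} hx hy n => by
    rw [AdicCompletion.val_add]
    exact Submodule.add_mem _ (hx n) (hy n)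
  smul_mem' := fun c x hx n => by
    obtain ⟨k, hkN, hk⟩ := Submodule.mem_map.mp (hx n)
    obtain ⟨a, ha⟩ := Ideal.Quotient.mk_surjective (I := (J ^ n • ⊤ : Ideal A)) (c.val n)
    have hval : (c • x).val n = c.val n • x.val n := rfl
    show (c • x).val n ∈ _
    rw [hval, ← ha, ← hk]
    exact Submodule.mem_map.mpr ⟨a • k, N.smul_mem a hkN, rfl⟩

/-- `Ĵ = Â·J`, the completion of the ideal `J`. -/
noncomputable def Jhat : Ideal (AdicCompletion J A) := J.map (algebraMap A (AdicCompletion J A))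

section AuxiliaryLemmas

open Submodule

variable {A : Type*} [CommRing A] (J : Ideal A)
variable {M : Type*} [AddCommGroup M] [Module A M]

theorem mem_subCompletion_iff {N : Submodule A M} {x : AdicCompletion J M} :
    x ∈ subCompletion J N ↔ ∀ n : ℕ,
      x.val n ∈ Submodule.map (Submodule.mkQ (J ^ n • ⊤ : Submodule A M)) N := Iff.rfl

theorem subCompletion_mono {N N' : Submodule A M} (h : N ≤ N') :
    subCompletion J N ≤ subCompletion J N' := fun x hx n =>
  Submodule.map_mono h (hx n)

/-- Evaluation at level `n` as a ring homomorphism. -/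
def evalRingHom (n : ℕ) : AdicCompletion J A →+* A ⧸ (J ^ n • ⊤ : Ideal A) where
  toFun r := r.val n
  map_one' := rfl
  map_mul' _ _ := rfl
  map_zero' := rfl
  map_add' _ _ := rfl

theorem val_mem_map_of_mem_Jhat_pow {n k : ℕ} {r : AdicCompletion J A}
    (hr : r ∈ (Jhat J) ^ n) :
    r.val k ∈ (J ^ n).map (Ideal.Quotient.mk (J ^ k • ⊤ : Ideal A)) := by
  rw [Jhat, ← Ideal.map_pow] at hr
  have := Ideal.mem_map_of_mem (evalRingHom J k) hr
  rwa [Ideal.map_map, show (evalRingHom J k).comp (algebraMap A (AdicCompletion J A)) =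
    Ideal.Quotient.mk _ from rfl] at this

/-- Direction 1 of the generalized Artin–Rees comparison: with `m = n`,
`Ĵ^n • M̂' ⊆ (M' ∩ J^n M)^`. -/
theorem pow_smul_subCompletion_le (M' : Submodule A M) (n : ℕ) :
    (Jhat J) ^ n • subCompletion J M' ≤ subCompletion J (M' ⊓ (J ^ n • ⊤)) := by
  rw [Submodule.smul_le]
  intro r hr x hx k
  obtain ⟨m', hm', hmk⟩ := Submodule.mem_map.mp (hx k)
  have hrk := val_mem_map_of_mem_Jhat_pow J hr (k := k)
  obtain ⟨a, haJ, ha⟩ := Ideal.mem_map_iff_of_surjective _ Ideal.Quotient.mk_surjective |>.mp hrk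
  have hval : (r • x).val k = r.val k • x.val k := rfl
  rw [hval, ← hmk, ← ha, Submodule.mkQ_apply, AdicCompletion.mk_smul_mk]
  refine Submodule.mem_map.mpr ⟨a • m', ?_, ?_⟩
  swap
  · rw [Submodule.mkQ_apply, Submodule.Quotient.mk_smul]
  exact ⟨M'.smul_mem a hm', Submodule.smul_mem_smul haJ Submodule.mem_top⟩

end AuxiliaryLemmas
section HardLemma

open Submodule LinearMap

variable {A : Type*} [CommRing A] (J : Ideal A)
variable {M : Type*} [AddCommGroup M] [Module A M]

theorem transitionMap_mk {m n : ℕ} (hmn : m ≤ n) (x : M) :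
    transitionMap J M hmn (Submodule.Quotient.mk x) = Submodule.Quotient.mk x := rfl

/-- If `J` is finitely generated, then `(J^m M)^ ⊆ Ĵ^m M̂`. -/
theorem subCompletion_pow_smul_top_le (hJ : J.FG) (m : ℕ) :
    subCompletion J (J ^ m • ⊤ : Submodule A M) ≤
      (Jhat J) ^ m • (⊤ : Submodule (AdicCompletion J A) (AdicCompletion J M)) := by
  classical
  obtain ⟨s, hs⟩ := Submodule.FG.pow hJ m
  set N : Submodule A M := (J ^ m • ⊤ : Submodule A M) with hN
  set g : ((↥s : Type _) → M) →ₗ[A] M := ∑ i : ↥s, (i : A) • LinearMap.proj i with hg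
  have hgapp : ∀ y, g y = ∑ i : ↥s, (i : A) • y i := by
    intro y
    rw [hg]
    simp
  have hsJ : ∀ i : ↥s, (i : A) ∈ J ^ m := fun i => hs ▸ Submodule.subset_span i.2
  have hrange : LinearMap.range g = N := by
    apply le_antisymm
    · rintro _ ⟨y, rfl⟩
      rw [hgapp]
      exact Submodule.sum_mem _ fun i _ => Submodule.smul_mem_smul (hsJ i) Submodule.mem_top
    · rw [hN, ← hs, Submodule.smul_le]
      intro a ha x _
      induction ha using Submodule.span_induction with
      | mem b hb =>
          refine ⟨Pi.single (⟨b, hb⟩ : ↥s) x, ?_⟩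
          rw [hgapp]
          simp [Pi.single_apply]
      | zero => simpa using Submodule.zero_mem (LinearMap.range g)
      | add a b _ _ iha ihb =>
          rw [add_smul]
          exact Submodule.add_mem _ iha ihb
      | smul c a _ ih =>
          rw [smul_assoc]
          exact Submodule.smul_mem _ c ih
  intro x hx
  choose ν hν1 hν2 using fun k => Submodule.mem_map.mp (hx (k + m))
  have hcomp : ∀ {k l : ℕ}, k ≤ l →
      Submodule.Quotient.mk (p := (J ^ (k + m) • ⊤ : Submodule A M)) (ν k) =
        Submodule.Quotient.mk (ν l) := by
    intro k l hkl
    have h1 : transitionMap J M (Nat.add_le_add_right hkl m) (x.val (l + m)) = x.val (k + m) :=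
      x.property _
    rw [← hν2 l, Submodule.mkQ_apply, transitionMap_mk] at h1
    rw [← hν2 k, Submodule.mkQ_apply] at h1
    exact h1.symm
  have hNle : ∀ k l : ℕ, k ≤ l → ((⟨ν k, hν1 k⟩ : N) - ⟨ν l, hν1 l⟩) ∈
      (J ^ k • ⊤ : Submodule A N) := by
    intro k l hkl
    have hmem : ν k - ν l ∈ (J ^ (k + m) • ⊤ : Submodule A M) :=
      (Submodule.Quotient.eq _).mp (hcomp hkl)
    have hle : (J ^ (k + m) • ⊤ : Submodule A M) ≤
        Submodule.map N.subtype (J ^ k • ⊤ : Submodule A N) := by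
      rw [Submodule.map_smul'', Submodule.map_top, Submodule.range_subtype, pow_add, mul_smul,
        ← hN]
    obtain ⟨w, hw, hwv⟩ := hle hmem
    have hweq : w = (⟨ν k, hν1 k⟩ : N) - ⟨ν l, hν1 l⟩ := Subtype.ext (by simpa using hwv)
    exact hweq ▸ hw
  set c : AdicCauchySequence J N :=
    ⟨fun k => ⟨ν k, hν1 k⟩, fun {k l} hkl => SModEq.sub_mem.mpr (hNle k l hkl)⟩ with hc
  have hx_eq : x = map J N.subtype (AdicCompletion.mk J N c) := by
    refine AdicCompletion.ext fun j => ?_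
    have h1 : Submodule.Quotient.mk (p := (J ^ j • ⊤ : Submodule A M)) (ν j) = x.val j := by
      have h2 := x.property (Nat.le_add_right j m)
      rw [← h2, ← hν2 j, Submodule.mkQ_apply, transitionMap_mk]
    rw [map_val_apply]
    have h3 : (AdicCompletion.mk J N c).val j =
        Submodule.Quotient.mk (p := (J ^ j • ⊤ : Submodule A N)) (c j) := rfl
    rw [h3, LinearMap.reduceModIdeal_apply]
    exact h1.symm
  have hg' : Function.Surjective
      (g.codRestrict N (fun y => hrange ▸ LinearMap.mem_range_self g y)) := by
    rintro ⟨y, hy⟩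
    rw [← hrange] at hy
    obtain ⟨z, hz⟩ := hy
    exact ⟨z, Subtype.ext hz⟩
  obtain ⟨yhat, hyhat⟩ := AdicCompletion.map_surjective J hg' (AdicCompletion.mk J N c)
  have hx_eq2 : x = map J g yhat := by
    rw [hx_eq, ← hyhat, map_comp_apply, LinearMap.subtype_comp_codRestrict]
  have key : map J g yhat = ∑ i : ↥s, (i : A) • map J (LinearMap.proj i) yhat := by
    refine AdicCompletion.induction_on J _ yhat
      (p := fun y => AdicCompletion.map J g y =
        ∑ i : ↥s, (i : A) • AdicCompletion.map J (LinearMap.proj i) y) (fun a => ?_)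
    refine AdicCompletion.ext fun k => ?_
    rw [val_sum]
    have h4 : (map J g (AdicCompletion.mk J _ a)).val k =
        Submodule.Quotient.mk (p := (J ^ k • ⊤ : Submodule A M)) (g (a k)) := rfl
    rw [h4, hgapp]
    rw [show (Submodule.Quotient.mk (p := (J ^ k • ⊤ : Submodule A M)) (∑ i : ↥s, (i : A) • a k i))
      = ∑ i : ↥s, (i : A) • Submodule.Quotient.mk (p := (J ^ k • ⊤ : Submodule A M)) (a k i) by
        simp only [← Submodule.mkQ_apply, map_sum, map_smul]]
    rw [Finset.sum_apply]
    refine Finset.sum_congr rfl fun i _ => ?_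
    rw [val_smul]
    rfl
  rw [hx_eq2, key]
  refine Submodule.sum_mem _ fun i _ => ?_
  rw [← algebraMap_smul (AdicCompletion J A) (i : A)]
  refine Submodule.smul_mem_smul ?_ Submodule.mem_top
  rw [Jhat, ← Ideal.map_pow]
  exact Ideal.mem_map_of_mem _ (hsJ i)

end HardLemma
section ArtinRees

open Submodule

/-- Artin–Rees lemma, with heterogeneous universes (reduced to the mathlib version
via a surjection from a finite free module). -/
theorem artinRees_hetero {R : Type*} [CommRing R] [IsNoetherianRing R]
    {M : Type*} [AddCommGroup M] [Module R M] [Module.Finite R M]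
    (I : Ideal R) (N : Submodule R M) :
    ∃ k : ℕ, ∀ n ≥ k, I ^ n • ⊤ ⊓ N = I ^ (n - k) • (I ^ k • ⊤ ⊓ N) := by
  obtain ⟨d, f, hf⟩ := Module.Finite.exists_fin' R M
  have htop : Submodule.map f ⊤ = ⊤ := by
    rw [Submodule.map_top, LinearMap.range_eq_top]
    exact hf
  have h1 : ∀ j : ℕ, Submodule.map f ((I ^ j • ⊤ : Submodule R (Fin d → R)) ⊓ N.comap f)
      = (I ^ j • ⊤ : Submodule R M) ⊓ N := by
    intro j
    apply le_antisymm
    · rintro _ ⟨y, ⟨hy1, hy2⟩, rfl⟩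
      refine ⟨?_, hy2⟩
      have : f y ∈ Submodule.map f (I ^ j • ⊤ : Submodule R (Fin d → R)) :=
        Submodule.mem_map_of_mem hy1
      rwa [Submodule.map_smul'', htop] at this
    · rintro x ⟨hx1, hx2⟩
      have : x ∈ Submodule.map f (I ^ j • ⊤ : Submodule R (Fin d → R)) := by
        rwa [Submodule.map_smul'', htop]
      obtain ⟨y, hy, rfl⟩ := this
      exact ⟨y, ⟨hy, hx2⟩, rfl⟩
  obtain ⟨k, hk⟩ := Ideal.exists_pow_inf_eq_pow_smul I (N.comap f)
  refine ⟨k, fun n hn => ?_⟩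
  rw [← h1 n, hk n hn, Submodule.map_smul'', h1 k]

end ArtinRees
/-- Generalized Artin–Rees lemma: if `J` is finitely generated and the completion `Â`
is Noetherian, then for a finitely generated module `M` and a submodule `M' ⊆ M`, the
filtrations `(Ĵ^n • M̂')` and `((M' ∩ J^n M)^)` define the same topology on `M̂'`,
i.e. they are mutually cofinal. -/
theorem generalized_artinRees_topologies
    (hJ : J.FG) (hNoeth : IsNoetherianRing (AdicCompletion J A))
    [Module.Finite A M] (M' : Submodule A M) :
    (∀ n : ℕ, ∃ m : ℕ,
        (Jhat J) ^ m • subCompletion J M' ≤ subCompletion J (M' ⊓ (J ^ n • ⊤))) ∧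
    (∀ n : ℕ, ∃ m : ℕ,
        subCompletion J (M' ⊓ (J ^ m • ⊤)) ≤ (Jhat J) ^ n • subCompletion J M') := by
  haveI := hNoeth
  haveI : Module.Finite (AdicCompletion J A) (AdicCompletion J M) :=
    Module.Finite.of_surjective (ofTensorProduct J M) (ofTensorProduct_surjective_of_finite J M)
  constructor
  · exact fun n => ⟨n, pow_smul_subCompletion_le J M' n⟩
  · intro n
    obtain ⟨k, hk⟩ := artinRees_hetero (Jhat J) (subCompletion J M')
    refine ⟨n + k, ?_⟩
    calc subCompletion J (M' ⊓ (J ^ (n + k) • ⊤))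
        ≤ (Jhat J) ^ (n + k) • (⊤ : Submodule (AdicCompletion J A) (AdicCompletion J M)) ⊓
            subCompletion J M' := by
          refine le_inf ?_ (subCompletion_mono J inf_le_left)
          exact le_trans (subCompletion_mono J inf_le_right)
            (subCompletion_pow_smul_top_le J hJ (n + k))
      _ = (Jhat J) ^ (n + k - k) • ((Jhat J) ^ k • ⊤ ⊓ subCompletion J M') :=
          hk (n + k) (Nat.le_add_left k n)
      _ ≤ (Jhat J) ^ n • subCompletion J M' := by
          rw [Nat.add_sub_cancel]
          exact smul_mono_right ((Jhat J) ^ n) inf_le_right
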